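/- Let G be a group with a conjugation-invariant norm ν, let ω be a non-principal ultrafilter on ℕ, and let f : G → ℝ satisfy |f(g)| ≤ C·ν(g) for all g ∈ G. Suppose there is an increasing function φ : [0,∞) → [0,∞) with φ(t)/t → 0 as t → ∞ such that |f(g) − f(gh) + f(h)| ≤ φ(ν(g) + ν(h)) for all g, h ∈ G. Then for all sequences (g_n), (h_n) in G with ν(g_n) ≤ K·n and ν(h_n) ≤ K·n for all n ≥ 1 (some K > 0), one has lim_ω f(g_n h_n)/n = lim_ω f(g_n)/n + lim_ω f(h_n)/n (all three ultralimits existing). (This says that the induced function on the asymptotic cone of (G, ν) is a group homomorphism to ℝ.) -/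

import Mathlib

open Filter Topology

lemma exists_ultralim_aux (ω : Ultrafilter ℕ) (a : ℕ → ℝ) (M : ℝ)
    (hb : ∀ᶠ n in (↑ω : Filter ℕ), a n ∈ Set.Icc (-M) M) :
    ∃ L, Tendsto a (↑ω : Filter ℕ) (𝓝 L) := by
  obtain ⟨L, _, hL⟩ := (isCompact_Icc (a := -M) (b := M)).ultrafilter_le_nhds (ω.map a)
    (le_principal_iff.mpr (Ultrafilter.mem_map.mpr hb))
  exact ⟨L, hL⟩

/-- Let `ν` be a conjugation-invariant norm on `G`, `f : G → ℝ` with `|f(g)| ≤ C·ν(g)`,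
and suppose `|f(g) − f(gh) + f(h)| ≤ φ(ν(g) + ν(h))` for an increasing `φ ≥ 0` with
`φ(t)/t → 0`. Then for all sequences `(gₙ)`, `(hₙ)` of at most linear growth the
ultralimits along a non-principal ultrafilter satisfy
`lim_ω f(gₙhₙ)/n = lim_ω f(gₙ)/n + lim_ω f(hₙ)/n`: the induced function on the asymptotic
cone is a homomorphism to `ℝ`. -/
theorem cone_function_homomorphism {G : Type*} [Group G] (ν : G → ℝ)
    (hν_nonneg : ∀ g : G, 0 ≤ ν g)
    (hν_zero : ∀ g : G, ν g = 0 ↔ g = 1)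
    (hν_inv : ∀ g : G, ν g⁻¹ = ν g)
    (hν_mul : ∀ g h : G, ν (g * h) ≤ ν g + ν h)
    (hν_conj : ∀ g h : G, ν (h⁻¹ * g * h) = ν g)
    (ω : Ultrafilter ℕ) (hω : (↑ω : Filter ℕ) ≤ Filter.cofinite)
    (f : G → ℝ) (C : ℝ)
    (hf : ∀ g : G, |f g| ≤ C * ν g)
    (φ : ℝ → ℝ)
    (hmono : ∀ s t : ℝ, 0 ≤ s → s ≤ t → φ s ≤ φ t)
    (hnonneg : ∀ t : ℝ, 0 ≤ t → 0 ≤ φ t)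
    (hφ : Tendsto (fun t : ℝ => φ t / t) atTop (𝓝 0))
    (hdef : ∀ g h : G, |f g - f (g * h) + f h| ≤ φ (ν g + ν h)) :
    ∀ (g h : ℕ → G) (K : ℝ), 0 < K →
      (∀ n : ℕ, 1 ≤ n → ν (g n) ≤ K * n) →
      (∀ n : ℕ, 1 ≤ n → ν (h n) ≤ K * n) →
      ∃ A E : ℝ,
        Tendsto (fun n : ℕ => f (g n) / n) (↑ω : Filter ℕ) (𝓝 A) ∧
        Tendsto (fun n : ℕ => f (h n) / n) (↑ω : Filter ℕ) (𝓝 E) ∧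
        Tendsto (fun n : ℕ => f (g n * h n) / n) (↑ω : Filter ℕ) (𝓝 (A + E)) := by
  intro g h K hK hg hh
  -- eventually n ≥ 1 along ω
  have h1 : ∀ᶠ n in (↑ω : Filter ℕ), 1 ≤ n := by
    apply hω
    simp [Filter.eventually_cofinite]
    exact (Set.finite_singleton 0).subset (by intro n hn; simpa using Nat.lt_one_iff.mp (not_le.mp hn))
  set C' := max C 0 with hC'
  have hC0 : 0 ≤ C' := le_max_right _ _
  have hfC' : ∀ x : G, |f x| ≤ C' * ν x := fun x =>
    (hf x).trans (mul_le_mul_of_nonneg_right (le_max_left _ _) (hν_nonneg x))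
  -- generic boundedness
  have bound : ∀ (u : ℕ → G), (∀ n : ℕ, 1 ≤ n → ν (u n) ≤ K * n) →
      ∀ᶠ n in (↑ω : Filter ℕ), f (u n) / n ∈ Set.Icc (-(C' * K)) (C' * K) := by
    intro u hu
    filter_upwards [h1] with n hn
    have hn0 : (0 : ℝ) < n := by exact_mod_cast hn
    have h1 : |f (u n)| ≤ C' * (K * n) :=
      (hfC' (u n)).trans (mul_le_mul_of_nonneg_left (hu n hn) hC0)
    have h2 : |f (u n) / n| ≤ C' * K := by
      rw [abs_div, abs_of_pos hn0, div_le_iff₀ hn0]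
      calc |f (u n)| ≤ C' * (K * n) := h1
        _ = C' * K * n := by ring
    exact abs_le.mp h2
  obtain ⟨A, hA⟩ := exists_ultralim_aux ω _ (C' * K) (bound g hg)
  obtain ⟨E, hE⟩ := exists_ultralim_aux ω _ (C' * K) (bound h hh)
  refine ⟨A, E, hA, hE, ?_⟩
  -- error term
  set e : ℕ → ℝ := fun n => f (g n * h n) / n - f (g n) / n - f (h n) / n with he
  -- φ(2Kn)/n → 0 along atTop
  have hφ2 : Tendsto (fun n : ℕ => φ (2 * K * n) / n) atTop (𝓝 0) := by
    have h2K : (0 : ℝ) < 2 * K := by linarith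
    have ht : Tendsto (fun n : ℕ => 2 * K * (n : ℝ)) atTop atTop :=
      Tendsto.const_mul_atTop h2K tendsto_natCast_atTop_atTop
    have := (hφ.comp ht).const_mul (2 * K)
    rw [mul_zero] at this
    apply this.congr'
    filter_upwards [eventually_ge_atTop 1] with n hn
    have hn0 : (0 : ℝ) < n := by exact_mod_cast hn
    have hK0 : K ≠ 0 := hK.ne'
    simp only [Function.comp_apply]
    field_simp
  have hφ2ω : Tendsto (fun n : ℕ => φ (2 * K * n) / n) (↑ω : Filter ℕ) (𝓝 0) := by
    apply hφ2.mono_left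
    rwa [← Nat.cofinite_eq_atTop]
  have heb : ∀ᶠ n in (↑ω : Filter ℕ), |e n| ≤ φ (2 * K * n) / n := by
    filter_upwards [h1] with n hn
    have hn0 : (0 : ℝ) < n := by exact_mod_cast hn
    have key : |f (g n) - f (g n * h n) + f (h n)| ≤ φ (2 * K * n) := by
      refine (hdef (g n) (h n)).trans (hmono _ _ ?_ ?_)
      · exact add_nonneg (hν_nonneg _) (hν_nonneg _)
      · have := add_le_add (hg n hn) (hh n hn); linarith
    have : e n = (f (g n * h n) - f (g n) - f (h n)) / n := by
      simp only [he]; field_simp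
    rw [this, abs_div, abs_of_pos hn0, div_le_div_iff_of_pos_right hn0]
    rw [show f (g n * h n) - f (g n) - f (h n) = -(f (g n) - f (g n * h n) + f (h n)) by ring,
      abs_neg]
    exact key
  have he0 : Tendsto e (↑ω : Filter ℕ) (𝓝 0) := by
    refine squeeze_zero_norm' ?_ hφ2ω
    filter_upwards [heb] with n hn
    simpa using hn
  have : Tendsto (fun n : ℕ => f (g n) / n + f (h n) / n + e n) (↑ω : Filter ℕ)
      (𝓝 (A + E + 0)) := ((hA.add hE).add he0)
  rw [add_zero] at this
  apply this.congr
  intro n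
  simp only [he]
  ring
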